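/- Let n ≥ 1, let λ_1, …, λ_n be reals, and set Λ := diag(λ_1, …, λ_n). Let P be an n×n real matrix such that I + P is invertible, and set C := (I − P)(I + P)⁻¹. Denote by cosh Λ, sinh Λ, e^Λ, e^{−2Λ} the diagonal matrices with diagonal entries cosh λ_i, sinh λ_i, e^{λ_i}, e^{−2λ_i} respectively. Then det(cosh Λ + C·sinh Λ) = 2^{−n}·det(I + C)·(∏_{i=1}^n e^{λ_i})·det(I + P·e^{−2Λ}). -/
import Mathlib


open Matrix Real

/-- The determinant identity
`det(cosh Λ + C sinh Λ) = 2^{−n} det(I + C) (∏ e^{λ_i}) det(I + P e^{−2Λ})`,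
where `Λ = diag(λ_1,…,λ_n)`, `I + P` is invertible and `C = (I − P)(I + P)⁻¹`. -/
theorem det_cosh_add_cayley_sinh
    (n : ℕ) (hn : 1 ≤ n) (lam : Fin n → ℝ)
    (P : Matrix (Fin n) (Fin n) ℝ) (hP : IsUnit (1 + P).det)
    (C : Matrix (Fin n) (Fin n) ℝ) (hC : C = (1 - P) * (1 + P)⁻¹) :
    (Matrix.diagonal (fun i => Real.cosh (lam i)) +
        C * Matrix.diagonal (fun i => Real.sinh (lam i))).det =
      (2 : ℝ) ^ (-(n : ℤ)) * (1 + C).det * (∏ i, Real.exp (lam i)) *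
        (1 + P * Matrix.diagonal (fun i => Real.exp (-2 * lam i))).det := by
  set De : Matrix (Fin n) (Fin n) ℝ := Matrix.diagonal (fun i => Real.exp (lam i)) with hDe
  set Dn : Matrix (Fin n) (Fin n) ℝ := Matrix.diagonal (fun i => Real.exp (-lam i)) with hDn
  set Dm : Matrix (Fin n) (Fin n) ℝ := Matrix.diagonal (fun i => Real.exp (-2 * lam i)) with hDm
  have hmul : (1 + P) * (1 + P)⁻¹ = 1 := Matrix.mul_nonsing_inv _ hP
  have hmul' : (1 + P)⁻¹ * (1 + P) = 1 := Matrix.nonsing_inv_mul _ hP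
  -- commutation of P with (1+P)⁻¹
  have hcomm : (1 + P)⁻¹ * P = P * (1 + P)⁻¹ := by
    have h : (1 + P)⁻¹ * (P * (1 + P)) * (1 + P)⁻¹ =
        (1 + P)⁻¹ * ((1 + P) * P) * (1 + P)⁻¹ := by noncomm_ring
    calc (1 + P)⁻¹ * P = (1 + P)⁻¹ * (P * ((1 + P) * (1 + P)⁻¹)) := by rw [hmul, mul_one]
      _ = (1 + P)⁻¹ * (P * (1 + P)) * (1 + P)⁻¹ := by noncomm_ring
      _ = (1 + P)⁻¹ * ((1 + P) * P) * (1 + P)⁻¹ := h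
      _ = ((1 + P)⁻¹ * (1 + P)) * (P * (1 + P)⁻¹) := by noncomm_ring
      _ = P * (1 + P)⁻¹ := by rw [hmul', one_mul]
  have htwo : (1 + P) + (1 - P) = (2 : ℝ) • (1 : Matrix (Fin n) (Fin n) ℝ) := by
    ext i j
    by_cases h : i = j <;>
      simp [Matrix.add_apply, Matrix.sub_apply, Matrix.one_apply, h] <;> norm_num
  have htwoP : (1 + P) - (1 - P) = (2 : ℝ) • P := by
    ext i j
    by_cases h : i = j <;>
      simp [Matrix.add_apply, Matrix.sub_apply, Matrix.one_apply, h] <;> ring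
  have hadd : 1 + C = (2 : ℝ) • (1 + P)⁻¹ := by
    rw [hC]
    nth_rewrite 1 [← hmul]
    rw [← add_mul, htwo, smul_mul_assoc, one_mul]
  have hsub : 1 - C = (2 : ℝ) • (P * (1 + P)⁻¹) := by
    rw [hC]
    nth_rewrite 1 [← hmul]
    rw [← sub_mul, htwoP, smul_mul_assoc]
  have hCP : (1 + C) * P = 1 - C := by
    rw [hadd, hsub, smul_mul_assoc, hcomm]
  have hDmDe : Dm * De = Dn := by
    rw [hDm, hDe, hDn, Matrix.diagonal_mul_diagonal]
    have h : (fun i => Real.exp (-2 * lam i) * Real.exp (lam i)) =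
        fun i => Real.exp (-lam i) := by
      funext i
      rw [← Real.exp_add]
      ring_nf
    rw [h]
  have hc : Matrix.diagonal (fun i => Real.cosh (lam i)) = (2 : ℝ)⁻¹ • (De + Dn) := by
    rw [hDe, hDn]
    ext i j
    rcases eq_or_ne i j with h | h
    · subst h
      simp [Real.cosh_eq]
      ring
    · simp [Matrix.diagonal_apply_ne _ h]
  have hs : Matrix.diagonal (fun i => Real.sinh (lam i)) = (2 : ℝ)⁻¹ • (De - Dn) := by
    rw [hDe, hDn]
    ext i j
    rcases eq_or_ne i j with h | h
    · subst h
      simp [Real.sinh_eq]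
      ring
    · simp [Matrix.diagonal_apply_ne _ h]
  have hkey : Matrix.diagonal (fun i => Real.cosh (lam i)) +
      C * Matrix.diagonal (fun i => Real.sinh (lam i)) =
      (2 : ℝ)⁻¹ • ((1 + C) * ((1 + P * Dm) * De)) := by
    have hexp : (1 + C) * ((1 + P * Dm) * De) = (1 + C) * De + (1 - C) * Dn := by
      calc (1 + C) * ((1 + P * Dm) * De) = (1 + C) * (De + P * (Dm * De)) := by noncomm_ring
        _ = (1 + C) * De + ((1 + C) * P) * Dn := by rw [hDmDe]; noncomm_ring
        _ = (1 + C) * De + (1 - C) * Dn := by rw [hCP]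
    rw [hc, hs, hexp, Matrix.mul_smul, ← smul_add]
    congr 1
    noncomm_ring
  rw [hkey, Matrix.det_smul, Matrix.det_mul, Matrix.det_mul]
  have hdetDe : De.det = ∏ i, Real.exp (lam i) := by rw [hDe, Matrix.det_diagonal]
  rw [hdetDe]
  have h2 : ((2 : ℝ)⁻¹) ^ (Fintype.card (Fin n)) = (2 : ℝ) ^ (-(n : ℤ)) := by
    simp [_root_.zpow_neg, zpow_natCast, inv_pow]
  rw [Fintype.card_fin] at h2 ⊢
  rw [h2]
  ring
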